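/- Let G be a locally compact Hausdorff group acting properly on a locally compact Hausdorff space X, and suppose the action satisfies Palais's slice property (SP). For x ∈ X set S_x := {y ∈ X : G_y ⊆ G_x}, and call a subset of the form W·(S_x ∩ U) an almost slice at x, where W is an open neighborhood of the identity in G and U is an open neighborhood of x in X. Then every almost slice at x is open in X, and the almost slices at x form a neighborhood base at x. -/

import Mathlib

open Pointwise

/-- A continuous action of `G` on `X` is *proper* if the map
`G × X → X × X, (g,x) ↦ (g • x, x)` is proper, i.e. preimages of compact sets
are compact. -/
def ProperAction (G X : Type*) [SMul G X] [TopologicalSpace G]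
    [TopologicalSpace X] : Prop :=
  ∀ K : Set (X × X), IsCompact K →
    IsCompact ((fun p : G × X => (p.1 • p.2, p.2)) ⁻¹' K)

/-- Palais's slice property (SP): every point `x` has a `G`-invariant open
neighborhood `U` admitting a `G_x`-slice through `x`. -/
def SliceProperty (G X : Type*) [Group G] [TopologicalSpace G]
    [TopologicalSpace X] [MulAction G X] : Prop :=
  ∀ x : X, ∃ U : Set X, ∃ hxU : x ∈ U, IsOpen U ∧
    ∃ hUinv : ∀ (g : G) (y : X), y ∈ U → g • y ∈ U,
    ∃ φ : U → G ⧸ MulAction.stabilizer G x,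
      Continuous φ ∧
      (∀ (g : G) (y : X) (hy : y ∈ U),
        φ ⟨g • y, hUinv g y hy⟩ = g • φ ⟨y, hy⟩) ∧
      φ ⟨x, hxU⟩ = (QuotientGroup.mk (1 : G) : G ⧸ MulAction.stabilizer G x)

/-- `S_x = {y : G_y ⊆ G_x}`. -/
def bigSlice (G : Type*) [Group G] {X : Type*} [MulAction G X] (x : X) : Set X :=
  {y : X | MulAction.stabilizer G y ≤ MulAction.stabilizer G x}

/-- Let `G` be a locally compact Hausdorff group acting properly on the locally
compact Hausdorff space `X`, satisfying Palais's slice property (SP).  An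
*almost slice* at `x` is a set `W • (S_x ∩ U)` with `W` an open neighborhood
of the identity in `G` and `U` an open neighborhood of `x` in `X`, where
`S_x = {y : G_y ⊆ G_x}`.  Then every almost slice at `x` is open in `X`, and
the almost slices at `x` form a neighborhood base at `x`. -/
theorem almostSlices_form_open_neighborhood_base
    (G : Type*) [Group G] [TopologicalSpace G] [IsTopologicalGroup G]
    [LocallyCompactSpace G] [T2Space G]
    (X : Type*) [TopologicalSpace X] [LocallyCompactSpace X] [T2Space X]
    [MulAction G X] [ContinuousSMul G X]
    (hproper : ProperAction G X) (hSP : SliceProperty G X) (x : X) :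
    (∀ (W : Set G) (U : Set X), IsOpen W → (1 : G) ∈ W → IsOpen U → x ∈ U →
       IsOpen (W • (bigSlice G x ∩ U))) ∧
    (∀ V ∈ nhds x, ∃ (W : Set G) (U : Set X),
       IsOpen W ∧ (1 : G) ∈ W ∧ IsOpen U ∧ x ∈ U ∧
       W • (bigSlice G x ∩ U) ⊆ V) := by
  constructor
  · -- openness of almost slices
    intro W U hWopen hW1 hUopen hUx
    rw [isOpen_iff_mem_nhds]
    intro z hz
    rw [Set.mem_smul] at hz
    obtain ⟨g, hgW, y, ⟨hyS, hyU⟩, rfl⟩ := hz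
    obtain ⟨Uy, hyUy, hUyopen, hinv, φ, hφc, hφeq, hφy⟩ := hSP y
    -- an open box around (g, g•y) mapping into U under (h, w) ↦ h⁻¹ • w
    have hO : IsOpen {p : G × X | p.1⁻¹ • p.2 ∈ U} :=
      hUopen.preimage (by fun_prop)
    have hgzO : (g, g • y) ∈ {p : G × X | p.1⁻¹ • p.2 ∈ U} := by
      simp [hyU]
    obtain ⟨W₁, N₁, hW₁o, hN₁o, hgW₁, hzN₁, hboxsub⟩ :=
      isOpen_prod_iff.mp hO g (g • y) hgzO
    set W₂ := W₁ ∩ W with hW₂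
    have hW₂o : IsOpen W₂ := hW₁o.inter hWopen
    have hgW₂ : g ∈ W₂ := ⟨hgW₁, hgW⟩
    have hzUy : g • y ∈ Uy := hinv g y hyUy
    set T : Set X :=
      Subtype.val '' (φ ⁻¹' ((QuotientGroup.mk : G → G ⧸ MulAction.stabilizer G y) '' W₂))
      with hT
    have hTopen : IsOpen T :=
      hUyopen.isOpenMap_subtype_val _
        (hφc.isOpen_preimage _ ((QuotientGroup.isOpenMap_coe) W₂ hW₂o))
    have hφz : φ ⟨g • y, hzUy⟩ = QuotientGroup.mk g := by
      rw [hφeq g y hyUy, hφy, MulAction.Quotient.smul_mk]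
      simp
    have hzT : g • y ∈ T := ⟨⟨g • y, hzUy⟩, ⟨g, hgW₂, hφz.symm⟩, rfl⟩
    refine Filter.mem_of_superset ((hN₁o.inter hTopen).mem_nhds ⟨hzN₁, hzT⟩) ?_
    rintro z' ⟨hz'N₁, ⟨⟨z'', hz'Uy⟩, hpre, rfl⟩⟩
    obtain ⟨g', hg'W₂, hφz'⟩ := hpre
    rw [Set.mem_smul]
    have hy'Uy : g'⁻¹ • z'' ∈ Uy := hinv g'⁻¹ z'' hz'Uy
    have hφy' : φ ⟨g'⁻¹ • z'', hy'Uy⟩ = QuotientGroup.mk 1 := by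
      rw [hφeq g'⁻¹ z'' hz'Uy, ← hφz', MulAction.Quotient.smul_mk]
      simp
    refine ⟨g', hg'W₂.2, g'⁻¹ • z'', ⟨?_, show _ ∈ U from hboxsub (Set.mk_mem_prod hg'W₂.1 hz'N₁)⟩, smul_inv_smul g' z''⟩
    intro h hh
    apply hyS
    have hh' : h • (g'⁻¹ • z'') = g'⁻¹ • z'' := hh
    have : φ ⟨h • (g'⁻¹ • z''), hinv h _ hy'Uy⟩ = QuotientGroup.mk h := by
      rw [hφeq h _ hy'Uy, hφy', MulAction.Quotient.smul_mk]
      simp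
    rw [show (⟨h • (g'⁻¹ • z''), hinv h _ hy'Uy⟩ : Uy) = ⟨g'⁻¹ • z'', hy'Uy⟩
          from Subtype.ext hh', hφy'] at this
    have := (QuotientGroup.eq (s := MulAction.stabilizer G y)).mp this
    simpa using this
  · -- almost slices are a neighborhood basis
    intro V hV
    have hc : ContinuousAt (fun p : G × X => p.1 • p.2) ((1 : G), x) :=
      continuous_smul.continuousAt
    have hpre : (fun p : G × X => p.1 • p.2) ⁻¹' V ∈ nhds ((1 : G), x) :=
      hc (by simpa using hV)
    rw [nhds_prod_eq, Filter.mem_prod_iff] at hpre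
    obtain ⟨s, hs, t, ht, hst⟩ := hpre
    obtain ⟨W, hWs, hWopen, hW1⟩ := mem_nhds_iff.mp hs
    obtain ⟨U, hUt, hUopen, hUx⟩ := mem_nhds_iff.mp ht
    refine ⟨W, U, hWopen, hW1, hUopen, hUx, ?_⟩
    rintro z hz
    rw [Set.mem_smul] at hz
    obtain ⟨g, hgW, y, ⟨_, hyU⟩, rfl⟩ := hz
    exact hst (Set.mk_mem_prod (hWs hgW) (hUt hyU))
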